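/- Let K be a natural number and let p be an even real polynomial of degree at most 2K satisfying p^{(k)}(1) = (−1)^k · k! for every 0 ≤ k ≤ K. Define κ : (0,∞) → ℝ by κ(s) = 1/s − p(s) for 0 < s < 1 and κ(s) = 0 for s ≥ 1. Then κ is K times continuously differentiable on (0,∞). -/

import Mathlib

open Polynomial

lemma poly_contDiff (r : ℝ[X]) {n : WithTop ℕ∞} : ContDiff ℝ n (fun x : ℝ => r.eval x) := by
  induction r using Polynomial.induction_on' with
  | add f g hf hg => simpa using hf.add hg
  | monomial k c => simpa [Polynomial.eval_monomial] using (contDiff_const (c := c)).mul (contDiff_id.pow k)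

lemma maxpow (n : ℕ) : ContDiff ℝ n (fun x : ℝ => max x 0 ^ (n + 1)) := by
  induction n with
  | zero =>
    rw [show ((0:ℕ):WithTop ℕ∞) = 0 from rfl, contDiff_zero]
    exact (continuous_id.max continuous_const).pow 1
  | succ n ih =>
    have hd : ∀ x : ℝ, HasDerivAt (fun x : ℝ => max x 0 ^ (n + 2))
        ((n + 2 : ℝ) * max x 0 ^ (n + 1)) x := by
      intro x
      rcases lt_trichotomy x 0 with hx | hx | hx
      · have hev : (fun x : ℝ => max x 0 ^ (n + 2)) =ᶠ[nhds x] fun _ => 0 := by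
          filter_upwards [eventually_lt_nhds hx] with y hy
          simp [max_eq_right hy.le, pow_succ]
        rw [max_eq_right hx.le]
        simpa [pow_succ] using (hasDerivAt_const x (0 : ℝ)).congr_of_eventuallyEq hev
      · subst hx
        rw [hasDerivAt_iff_tendsto_slope]
        have hb : ∀ y : ℝ, |slope (fun x : ℝ => max x 0 ^ (n + 2)) 0 y| ≤ |y| ^ (n + 1) := by
          intro y
          rcases le_or_gt y 0 with hy | hy
          · have h : slope (fun x : ℝ => max x 0 ^ (n + 2)) 0 y = 0 := by
              simp [slope_def_field, max_eq_right hy, max_eq_right (le_refl (0:ℝ))]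
            rw [h, abs_zero]
            positivity
          · rw [slope_def_field]
            rw [max_eq_left hy.le]
            have : (y ^ (n + 2) - max 0 0 ^ (n + 2)) / (y - 0) = y ^ (n + 1) := by
              field_simp [hy.ne']
              simp; ring
            rw [this, abs_pow]
          
        have h0 : Filter.Tendsto (fun y : ℝ => |y| ^ (n + 1)) (nhdsWithin 0 {(0:ℝ)}ᶜ) (nhds 0) := by
          have : Filter.Tendsto (fun y : ℝ => |y| ^ (n + 1)) (nhds 0) (nhds 0) := by
            have := ((continuous_abs.pow (n + 1)).tendsto (0:ℝ))
            convert this using 2 <;> simp [Pi.pow_apply]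
          exact this.mono_left nhdsWithin_le_nhds
        have := squeeze_zero_norm (f := fun y => slope (fun x : ℝ => max x 0 ^ (n + 2)) 0 y)
          (fun y => hb y) h0
        simpa [max_eq_right le_rfl, pow_succ] using this
      · have hev : (fun x : ℝ => max x 0 ^ (n + 2)) =ᶠ[nhds x] fun y => y ^ (n + 2) := by
          filter_upwards [eventually_gt_nhds hx] with y hy
          simp [max_eq_left hy.le]
        rw [max_eq_left hx.le]
        have h1 : HasDerivAt (fun y : ℝ => y ^ (n + 2)) ((n + 2 : ℝ) * x ^ (n + 1)) x := by
          have := hasDerivAt_pow (n + 2) x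
          refine this.congr_deriv ?_
          rw [show n + 2 - 1 = n + 1 by omega]; push_cast; ring
        exact h1.congr_of_eventuallyEq hev
    have hdiff : Differentiable ℝ (fun x : ℝ => max x 0 ^ (n + 2)) := fun x => (hd x).differentiableAt
    have hderiv : deriv (fun x : ℝ => max x 0 ^ (n + 2)) = fun x => (n + 2 : ℝ) * max x 0 ^ (n + 1) := by
      ext x; exact (hd x).deriv
    rw [show ((n + 1 : ℕ) : WithTop ℕ∞) = (n : WithTop ℕ∞) + 1 by push_cast; ring]
    refine contDiff_succ_iff_deriv.2 ⟨hdiff, by simp, ?_⟩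
    rw [hderiv]
    exact contDiff_const.mul ih

lemma iter_deriv_X_mul (p : ℝ[X]) (k : ℕ) :
    derivative^[k + 1] (X * p) = X * derivative^[k + 1] p + (k + 1) • derivative^[k] p := by
  induction k with
  | zero => simp [derivative_mul]; ring
  | succ k ih =>
    rw [Function.iterate_succ_apply' derivative (k+1), ih]
    rw [Function.iterate_succ_apply' derivative (k+1) p]
    simp only [derivative_add, derivative_mul, derivative_X, derivative_smul, one_mul]
    rw [Function.iterate_succ_apply' derivative k p]
    module

theorem stmt_5 (K : ℕ) (p : Polynomial ℝ)
    (heven : p.comp (-Polynomial.X) = p)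
    (hdeg : p.degree ≤ (2 * K : ℕ))
    (hder : ∀ k : ℕ, k ≤ K →
      (Polynomial.derivative^[k] p).eval 1 = (-1 : ℝ) ^ k * (Nat.factorial k : ℝ))
    (κ : ℝ → ℝ)
    (hκ : ∀ s : ℝ, 0 < s → κ s = if s < 1 then 1 / s - p.eval s else 0) :
    ContDiffOn ℝ K κ (Set.Ioi 0) := by
  set q : ℝ[X] := 1 - X * p with hqdef
  have hq0 : q ≠ 0 := by
    intro h
    have h1 : q.eval 0 = 1 := by simp [hqdef]
    rw [h] at h1; simp at h1
  have hqder : ∀ k ≤ K, (derivative^[k] q).IsRoot 1 := by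
    intro k hk
    rcases Nat.eq_zero_or_pos k with rfl | hpos
    · have := hder 0 (Nat.zero_le K)
      simp only [Function.iterate_zero, id_eq] at this ⊢
      simp [Polynomial.IsRoot, hqdef, this]
    · obtain ⟨j, rfl⟩ := Nat.exists_eq_succ_of_ne_zero hpos.ne'
      have hiter : derivative^[j + 1] q =
          0 - (X * derivative^[j + 1] p + (j + 1) • derivative^[j] p) := by
        rw [hqdef, Polynomial.iterate_derivative_sub,
          Polynomial.iterate_derivative_one (Nat.succ_pos j), iter_deriv_X_mul]
      have e1 := hder (j + 1) hk
      have e2 := hder j (le_trans (Nat.le_succ j) hk)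
      simp only [Polynomial.IsRoot, hiter, Polynomial.eval_sub, Polynomial.eval_add,
        Polynomial.eval_mul, Polynomial.eval_X, Polynomial.eval_zero, Polynomial.eval_smul,
        smul_eq_mul, e1, e2, one_mul]
      rw [Nat.factorial_succ, pow_succ]
      push_cast
      ring
  have hlt : K < q.rootMultiplicity 1 := by
    refine (Polynomial.lt_rootMultiplicity_iff_isRoot_iterate_derivative_of_mem_nonZeroDivisors
      hq0 ?_).2 hqder
    exact mem_nonZeroDivisors_of_ne_zero (by exact_mod_cast (Nat.factorial_ne_zero K))
  have hdvd : (X - C (1:ℝ)) ^ (K + 1) ∣ q :=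
    dvd_trans (pow_dvd_pow _ hlt) (q.pow_rootMultiplicity_dvd 1)
  obtain ⟨r, hr⟩ := hdvd
  have hg : ContDiffOn ℝ K
      (fun s : ℝ => max (1 - s) 0 ^ (K + 1) * ((-1 : ℝ) ^ (K + 1) * r.eval s / s))
      (Set.Ioi 0) := by
    apply ContDiffOn.mul
    · exact ((maxpow K).comp (contDiff_const.sub contDiff_id)).contDiffOn
    · refine ContDiffOn.div ?_ contDiffOn_id ?_
      · exact (contDiff_const.mul (poly_contDiff r)).contDiffOn
      · intro x hx; exact ne_of_gt hx
  apply hg.congr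
  intro s hs
  have hs0 : (0:ℝ) < s := hs
  rw [hκ s hs0]
  by_cases h : s < 1
  · rw [if_pos h]
    have hmax : max (1 - s) 0 = 1 - s := max_eq_left (by linarith)
    have h1 : ((s - 1) : ℝ) ^ (K + 1) * r.eval s = 1 - s * p.eval s := by
      have := congrArg (Polynomial.eval s) hr
      simp only [hqdef, Polynomial.eval_sub, Polynomial.eval_mul, Polynomial.eval_pow,
        Polynomial.eval_X, Polynomial.eval_one, Polynomial.eval_C] at this
      linarith [this]
    have h2 : ((1:ℝ) - s) ^ (K + 1) * (-1 : ℝ) ^ (K + 1) = (s - 1) ^ (K + 1) := by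
      rw [← mul_pow]; congr 1; ring
    rw [hmax]
    calc 1 / s - p.eval s = (1 - s * p.eval s) / s := by field_simp
      _ = ((s - 1) ^ (K + 1) * r.eval s) / s := by rw [h1]
      _ = (1 - s) ^ (K + 1) * ((-1 : ℝ) ^ (K + 1) * r.eval s / s) := by rw [← h2]; ring
  · rw [if_neg h]
    have hmax : max (1 - s) 0 = 0 := max_eq_right (by linarith [not_lt.1 h])
    rw [hmax, zero_pow (Nat.succ_ne_zero K), zero_mul]
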